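/- Assume d ≥ 1, L ≥ 1, γ > 0, λ > 0. The set of points (κ, ν) ∈ [−1, 1]² satisfying both (1 − κ²)·∂κR(κ, ν) = 0 and (1 − ν²)·∂νR(κ, ν) = 0 is exactly the five-point set {(0, 0), (1, 1), (1, −1), (−1, 1), (−1, −1)}. -/

import Mathlib

open MeasureTheory ProbabilityTheory Real Filter

noncomputable def erf (u : ℝ) : ℝ := 2 / Real.sqrt Real.pi * ∫ r in (0:ℝ)..u, Real.exp (-r ^ 2)

noncomputable def zeta (t s : ℝ) : ℝ := ∫ g, erf (t + g) ^ 2 ∂(gaussianReal 0 s.toNNReal)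

/-- The reduced risk `R(κ, ν)` on the invariant manifold. -/
noncomputable def Rred (d L : ℕ) (γ lam ε : ℝ) (κ ν : ℝ) : ℝ :=
  γ ^ 2 - 2 * γ ^ 2 * ν * erf (lam * Real.sqrt ((d : ℝ) / 2) * κ /
      Real.sqrt (1 + 2 * lam ^ 2 * γ ^ 2))
    + γ ^ 2 * zeta (lam * Real.sqrt ((d : ℝ) / 2) * κ) (lam ^ 2 * γ ^ 2)
    + ((L : ℝ) - 1) * zeta 0 (lam ^ 2) + ε ^ 2

/-- Partial derivative `∂κR` of the reduced risk with respect to its first argument. -/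
noncomputable def dkR (d L : ℕ) (γ lam ε : ℝ) (κ ν : ℝ) : ℝ :=
  deriv (fun x => Rred d L γ lam ε x ν) κ

/-- Partial derivative `∂νR` of the reduced risk with respect to its second argument. -/
noncomputable def dvR (d L : ℕ) (γ lam ε : ℝ) (κ ν : ℝ) : ℝ :=
  deriv (fun y => Rred d L γ lam ε κ y) ν

/-- The PGD map `g_α`. -/
noncomputable def pgd (d L : ℕ) (γ lam ε α : ℝ) (p : ℝ × ℝ) : ℝ × ℝ :=
  ((p.1 - α * dkR d L γ lam ε p.1 p.2 * (1 - p.1 ^ 2)) /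
      Real.sqrt (1 + α ^ 2 * (dkR d L γ lam ε p.1 p.2) ^ 2 * (1 - p.1 ^ 2)),
   (p.2 - α * dvR d L γ lam ε p.1 p.2 * (1 - p.2 ^ 2)) /
      Real.sqrt (1 + α ^ 2 * (dvR d L γ lam ε p.1 p.2) ^ 2 * (1 - p.2 ^ 2)))

/-- The square `[−1, 1]²`. -/
def sqIcc : Set (ℝ × ℝ) := {p | p.1 ∈ Set.Icc (-1 : ℝ) 1 ∧ p.2 ∈ Set.Icc (-1 : ℝ) 1}

/-! ### Auxiliary material on `erf` -/

noncomputable def erf' (u : ℝ) : ℝ := 2 / Real.sqrt Real.pi * Real.exp (-u ^ 2)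

lemma two_div_sqrt_pi_pos : 0 < 2 / Real.sqrt Real.pi :=
  div_pos two_pos (Real.sqrt_pos.2 Real.pi_pos)

lemma erf'_pos (u : ℝ) : 0 < erf' u := mul_pos two_div_sqrt_pi_pos (Real.exp_pos _)

lemma erf'_le (u : ℝ) : erf' u ≤ 2 / Real.sqrt Real.pi := by
  have := Real.exp_le_one_iff.2 (neg_nonpos.2 (sq_nonneg u))
  calc erf' u ≤ 2 / Real.sqrt Real.pi * 1 := by
        exact mul_le_mul_of_nonneg_left this two_div_sqrt_pi_pos.le
    _ = _ := mul_one _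

lemma erf'_even (u : ℝ) : erf' (-u) = erf' u := by simp [erf']

lemma cont_exp_neg_sq : Continuous fun r : ℝ => Real.exp (-r ^ 2) := by
  exact (Real.continuous_exp.comp (continuous_pow 2).neg)

lemma hasDerivAt_erf (u : ℝ) : HasDerivAt erf (erf' u) u := by
  have h : HasDerivAt (fun u => ∫ r in (0:ℝ)..u, Real.exp (-r ^ 2)) (Real.exp (-u ^ 2)) u := by
    refine intervalIntegral.integral_hasDerivAt_right
      (cont_exp_neg_sq.intervalIntegrable _ _)
      (cont_exp_neg_sq.stronglyMeasurableAtFilter _ _) cont_exp_neg_sq.continuousAt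
  exact h.const_mul (2 / Real.sqrt Real.pi)

@[fun_prop] lemma continuous_erf : Continuous erf :=
  continuous_iff_continuousAt.2 fun u => (hasDerivAt_erf u).continuousAt

@[fun_prop] lemma continuous_erf' : Continuous erf' := by
  unfold erf'; fun_prop

lemma erf_zero : erf 0 = 0 := by simp [erf]

lemma erf_strictMono : StrictMono erf :=
  strictMono_of_deriv_pos (fun u => by rw [(hasDerivAt_erf u).deriv]; exact erf'_pos u)

lemma erf_neg (u : ℝ) : erf (-u) = - erf u := by
  have h := intervalIntegral.integral_comp_neg (a := u) (b := 0) (fun r => Real.exp (-r ^ 2))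
  simp only [neg_neg, neg_zero] at h
  have h2 : ∀ x : ℝ, Real.exp (-(-x) ^ 2) = Real.exp (-x ^ 2) := fun x => by ring_nf
  rw [intervalIntegral.integral_symm 0 u] at h
  simp only [h2] at h
  simp [erf, ← h]

lemma erf_lt_one (u : ℝ) : erf u < 1 := by
  have hpi : (0:ℝ) < Real.sqrt Real.pi := Real.sqrt_pos.2 Real.pi_pos
  have key : ∫ r in (0:ℝ)..u, Real.exp (-r ^ 2) < Real.sqrt Real.pi / 2 := by
    have hIoi : ∫ r in Set.Ioi (0:ℝ), Real.exp (-r ^ 2) = Real.sqrt Real.pi / 2 := by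
      simpa using integral_gaussian_Ioi 1
    rcases le_or_gt u 0 with hu | hu
    · have : ∫ r in (0:ℝ)..u, Real.exp (-r ^ 2) ≤ 0 := by
        rw [intervalIntegral.integral_symm]
        simp only [neg_nonpos]
        exact intervalIntegral.integral_nonneg hu (fun r _ => (Real.exp_pos _).le)
      exact this.trans_lt (by positivity)
    · have hint : Integrable (fun r : ℝ => Real.exp (-r ^ 2)) := by
        simpa using integrable_exp_neg_mul_sq one_pos
      have hsplit : (Set.Ioc (0:ℝ) u) ∪ Set.Ioi u = Set.Ioi (0:ℝ) :=
        Set.Ioc_union_Ioi_eq_Ioi hu.le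
      have hdisj : Disjoint (Set.Ioc (0:ℝ) u) (Set.Ioi u) := by
        simp [Set.disjoint_left]
      have hadd : (∫ r in Set.Ioc (0:ℝ) u, Real.exp (-r ^ 2))
          + ∫ r in Set.Ioi u, Real.exp (-r ^ 2) = Real.sqrt Real.pi / 2 := by
        rw [← hIoi, ← hsplit, setIntegral_union hdisj measurableSet_Ioi
          hint.integrableOn hint.integrableOn]
      have hpos : 0 < ∫ r in Set.Ioi u, Real.exp (-r ^ 2) := by
        rw [setIntegral_pos_iff_support_of_nonneg_ae
          (Filter.Eventually.of_forall (fun r => (Real.exp_pos _).le)) hint.integrableOn]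
        have : (Function.support fun r : ℝ => Real.exp (-r ^ 2)) = Set.univ := by
          ext r; simp [Function.support, (Real.exp_pos _).ne']
        simp [this]
      rw [intervalIntegral.integral_of_le hu.le]
      linarith
  have : erf u < 2 / Real.sqrt Real.pi * (Real.sqrt Real.pi / 2) :=
    mul_lt_mul_of_pos_left key two_div_sqrt_pi_pos
  calc erf u < 2 / Real.sqrt Real.pi * (Real.sqrt Real.pi / 2) := this
    _ = 1 := by field_simp

lemma neg_one_lt_erf (u : ℝ) : -1 < erf u := by
  have := erf_lt_one (-u)
  rw [erf_neg] at this
  linarith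

lemma abs_erf_le_one (u : ℝ) : |erf u| ≤ 1 :=
  abs_le.2 ⟨(neg_one_lt_erf u).le, (erf_lt_one u).le⟩

lemma erf_eq_zero_iff {u : ℝ} : erf u = 0 ↔ u = 0 := by
  constructor
  · intro h
    have := erf_strictMono.injective (h.trans erf_zero.symm)
    exact this
  · rintro rfl; exact erf_zero

lemma erf_pos {u : ℝ} (hu : 0 < u) : 0 < erf u := by
  have := erf_strictMono hu
  rwa [erf_zero] at this

/-! ### Integrals against Gaussian measures -/

lemma integrable_of_bound {μ : Measure ℝ} [IsProbabilityMeasure μ] {f : ℝ → ℝ}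
    (hc : Continuous f) (C : ℝ) (hC : ∀ x, ‖f x‖ ≤ C) : Integrable f μ :=
  (integrable_const C).mono' hc.aestronglyMeasurable (Eventually.of_forall hC)

lemma gauss_int_pos {v : NNReal} {f : ℝ → ℝ} (hc : Continuous f) (hpos : ∀ x, 0 < f x)
    (C : ℝ) (hC : ∀ x, ‖f x‖ ≤ C) : 0 < ∫ x, f x ∂(gaussianReal 0 v) := by
  rw [integral_pos_iff_support_of_nonneg_ae (Eventually.of_forall fun x => (hpos x).le)
    (integrable_of_bound hc C hC)]
  have hsupp : Function.support f = Set.univ := by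
    ext x; simp [Function.support, (hpos x).ne']
  simp [hsupp]

lemma integral_gaussian_odd {v : NNReal} {f : ℝ → ℝ} (hc : Continuous f)
    (hodd : ∀ x, f (-x) = - f x) :
    ∫ x, f x ∂(gaussianReal 0 v) = 0 := by
  have hmap : (gaussianReal 0 v).map (fun x => -x) = gaussianReal 0 v := by
    have h := gaussianReal_map_const_mul (μ := 0) (v := v) (-1)
    have h1 : (NNReal.mk ((-1:ℝ)^2) (sq_nonneg _)) = 1 := by ext; norm_num
    rw [h1, one_mul, mul_zero] at h
    rw [← h]
    congr 1; funext x; ring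
  have key : ∫ x, f x ∂(gaussianReal 0 v) = ∫ x, f (-x) ∂(gaussianReal 0 v) := by
    conv_lhs => rw [← hmap]
    rw [integral_map (by fun_prop) hc.aestronglyMeasurable]
  have hneg : ∫ x, f (-x) ∂(gaussianReal 0 v) = - ∫ x, f x ∂(gaussianReal 0 v) := by
    simp only [hodd]
    exact integral_neg f
  linarith [key, hneg]

lemma integral_gaussianReal_eq {v : NNReal} (hv : v ≠ 0) (f : ℝ → ℝ) :
    ∫ x, f x ∂(gaussianReal 0 v) = ∫ x, gaussianPDFReal 0 v x * f x := by
  rw [gaussianReal_of_var_ne_zero _ hv]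
  have h : (gaussianPDF 0 v) = fun x => ((gaussianPDFReal 0 v x).toNNReal : ENNReal) := rfl
  rw [h, integral_withDensity_eq_integral_smul
    ((measurable_gaussianPDFReal 0 v).real_toNNReal) f]
  congr 1; funext x
  rw [NNReal.smul_def, smul_eq_mul, Real.coe_toNNReal _ (gaussianPDFReal_nonneg 0 v x)]

lemma integral_erf'_gaussian {s : ℝ} (hs : 0 < s) (t : ℝ) :
    ∫ g, erf' (t + g) ∂(gaussianReal 0 s.toNNReal)
      = erf' (t / Real.sqrt (1 + 2 * s)) / Real.sqrt (1 + 2 * s) := by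
  have hv : s.toNNReal ≠ 0 := by simp [Real.toNNReal_eq_zero, not_le, hs]
  have hsc : ((s.toNNReal : NNReal) : ℝ) = s := Real.coe_toNNReal _ hs.le
  have h2s : (0:ℝ) < 1 + 2 * s := by linarith
  set α : ℝ := (1 + 2 * s) / (2 * s) with hα
  have hαpos : 0 < α := by positivity
  set δ : ℝ := t / α with hδ
  set K : ℝ := (Real.sqrt (2 * π * s))⁻¹ * (2 / Real.sqrt π * Real.exp (-(t ^ 2 / (1 + 2 * s))))
    with hK
  rw [integral_gaussianReal_eq hv]
  have hpt : ∀ g : ℝ, gaussianPDFReal 0 s.toNNReal g * erf' (t + g)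
      = K * Real.exp (-(α * (g + δ) ^ 2)) := by
    intro g
    rw [gaussianPDFReal, hsc, erf', hK]
    rw [show (Real.sqrt (2 * π * s))⁻¹ * rexp (-(g - 0) ^ 2 / (2 * s))
        * (2 / Real.sqrt π * rexp (-(t + g) ^ 2))
      = (Real.sqrt (2 * π * s))⁻¹ * (2 / Real.sqrt π)
        * (rexp (-(g - 0) ^ 2 / (2 * s)) * rexp (-(t + g) ^ 2)) by ring]
    rw [show (Real.sqrt (2 * π * s))⁻¹ * (2 / Real.sqrt π * rexp (-(t ^ 2 / (1 + 2 * s))))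
        * rexp (-(α * (g + δ) ^ 2))
      = (Real.sqrt (2 * π * s))⁻¹ * (2 / Real.sqrt π)
        * (rexp (-(t ^ 2 / (1 + 2 * s))) * rexp (-(α * (g + δ) ^ 2))) by ring]
    congr 1
    rw [← Real.exp_add, ← Real.exp_add]
    congr 1
    rw [hδ, hα]
    field_simp
    ring
  rw [show (fun g => gaussianPDFReal 0 s.toNNReal g * erf' (t + g))
      = fun g => K * Real.exp (-(α * (g + δ) ^ 2)) from funext hpt]
  rw [integral_const_mul]
  have htrans : ∫ g : ℝ, Real.exp (-(α * (g + δ) ^ 2))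
      = ∫ u : ℝ, Real.exp (-(α * u ^ 2)) :=
    integral_add_right_eq_self (fun u => Real.exp (-(α * u ^ 2))) δ
  rw [htrans]
  rw [show (fun u : ℝ => Real.exp (-(α * u ^ 2))) = fun u : ℝ => Real.exp (-α * u ^ 2) by
    funext u; ring_nf, integral_gaussian]
  have h2πs : (0:ℝ) ≤ 2 * π * s := by positivity
  have hne : Real.sqrt (2 * π * s) ≠ 0 := by positivity
  have hπα : π / α = 2 * π * s / (1 + 2 * s) := by rw [hα]; field_simp
  rw [hπα, Real.sqrt_div h2πs, hK, erf']
  rw [show (t / Real.sqrt (1 + 2 * s)) ^ 2 = t ^ 2 / (1 + 2 * s) by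
    rw [div_pow, Real.sq_sqrt h2s.le]]
  field_simp

/-! ### Derivatives of the reduced risk -/

lemma hasDerivAt_zeta (s t : ℝ) :
    HasDerivAt (fun t => zeta t s)
      (∫ g, 2 * erf (t + g) * erf' (t + g) ∂(gaussianReal 0 s.toNNReal)) t := by
  set μ := gaussianReal 0 s.toNNReal
  have hF : ∀ (x a : ℝ), HasDerivAt (fun x => erf (x + a) ^ 2)
      (2 * erf (x + a) * erf' (x + a)) x := by
    intro x a
    have h1 : HasDerivAt (fun x : ℝ => erf (x + a)) (erf' (x + a)) x := by
      simpa [Function.comp_def] using (hasDerivAt_erf (x + a)).comp x ((hasDerivAt_id x).add_const a)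
    simpa [mul_comm, mul_assoc, mul_left_comm] using h1.fun_pow 2
  have hbound : ∀ (x a : ℝ), ‖2 * erf (x + a) * erf' (x + a)‖ ≤ 2 * (2 / Real.sqrt Real.pi) := by
    intro x a
    rw [norm_mul, norm_mul]
    have h1 : ‖erf (x + a)‖ ≤ 1 := abs_erf_le_one _
    have h2 : ‖erf' (x + a)‖ ≤ 2 / Real.sqrt Real.pi := by
      rw [Real.norm_eq_abs, abs_of_pos (erf'_pos _)]; exact erf'_le _
    have h3 : ‖(2:ℝ)‖ = 2 := by norm_num
    calc ‖(2:ℝ)‖ * ‖erf (x + a)‖ * ‖erf' (x + a)‖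
        ≤ 2 * 1 * (2 / Real.sqrt Real.pi) := by
          apply mul_le_mul _ h2 (norm_nonneg _) (by positivity)
          rw [h3]; exact mul_le_mul_of_nonneg_left h1 (by norm_num)
      _ = 2 * (2 / Real.sqrt Real.pi) := by ring
  have := hasDerivAt_integral_of_dominated_loc_of_deriv_le (μ := μ)
    (F := fun x a => erf (x + a) ^ 2) (F' := fun x a => 2 * erf (x + a) * erf' (x + a))
    (x₀ := t) (bound := fun _ => 2 * (2 / Real.sqrt Real.pi)) (s := Metric.ball t 1) (Metric.ball_mem_nhds t one_pos)
    (Eventually.of_forall fun x =>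
      (Continuous.aestronglyMeasurable (by fun_prop)))
    (integrable_of_bound (by fun_prop) 1 (fun a => by
      have := abs_erf_le_one (t + a)
      rw [Real.norm_eq_abs, abs_pow] ; nlinarith [abs_nonneg (erf (t+a))]))
    (Continuous.aestronglyMeasurable (by fun_prop))
    (Eventually.of_forall fun a x _ => hbound x a)
    (integrable_const _)
    (Eventually.of_forall fun a x _ => hF x a)
  exact this.2

lemma dvR_eq (d L : ℕ) (γ lam ε : ℝ) (κ ν : ℝ) :
    dvR d L γ lam ε κ ν = -(2 * γ ^ 2) * erf (lam * Real.sqrt ((d : ℝ) / 2) * κ /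
      Real.sqrt (1 + 2 * lam ^ 2 * γ ^ 2)) := by
  set E := erf (lam * Real.sqrt ((d : ℝ) / 2) * κ / Real.sqrt (1 + 2 * lam ^ 2 * γ ^ 2))
  set C := γ ^ 2 + γ ^ 2 * zeta (lam * Real.sqrt ((d : ℝ) / 2) * κ) (lam ^ 2 * γ ^ 2)
    + ((L : ℝ) - 1) * zeta 0 (lam ^ 2) + ε ^ 2
  have hfun : (fun y => Rred d L γ lam ε κ y) = fun y => -(2 * γ ^ 2) * E * y + C := by
    funext y; unfold Rred; simp only [E, C]; ring
  have h : HasDerivAt (fun y : ℝ => -(2 * γ ^ 2) * E * y + C) (-(2 * γ ^ 2) * E) ν := by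
    have h0 := ((hasDerivAt_id ν).const_mul (-(2 * γ ^ 2) * E)).add_const C
    rw [mul_one] at h0
    exact h0
  rw [dvR, hfun, h.deriv]

lemma dkR_eq (d L : ℕ) (γ lam ε : ℝ) (κ ν : ℝ) (hq : Real.sqrt (1 + 2 * lam ^ 2 * γ ^ 2) ≠ 0) :
    dkR d L γ lam ε κ ν =
      -(2 * γ ^ 2 * ν) * (erf' (lam * Real.sqrt ((d : ℝ) / 2) * κ /
          Real.sqrt (1 + 2 * lam ^ 2 * γ ^ 2)) *
        (lam * Real.sqrt ((d : ℝ) / 2) / Real.sqrt (1 + 2 * lam ^ 2 * γ ^ 2)))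
      + γ ^ 2 * ((∫ g, 2 * erf (lam * Real.sqrt ((d : ℝ) / 2) * κ + g) *
            erf' (lam * Real.sqrt ((d : ℝ) / 2) * κ + g)
            ∂(gaussianReal 0 (lam ^ 2 * γ ^ 2).toNNReal)) * (lam * Real.sqrt ((d : ℝ) / 2))) := by
  set b := lam * Real.sqrt ((d : ℝ) / 2) with hb
  set q := Real.sqrt (1 + 2 * lam ^ 2 * γ ^ 2) with hqd
  have h1 : HasDerivAt (fun x : ℝ => erf (b * x / q)) (erf' (b * κ / q) * (b / q)) κ := by
    have hl : HasDerivAt (fun x : ℝ => b * x / q) (b / q) κ := by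
      simpa using (((hasDerivAt_id κ).const_mul b).div_const q)
    exact (hasDerivAt_erf _).comp κ hl
  have h2 : HasDerivAt (fun x : ℝ => zeta (b * x) (lam ^ 2 * γ ^ 2))
      ((∫ g, 2 * erf (b * κ + g) * erf' (b * κ + g)
        ∂(gaussianReal 0 (lam ^ 2 * γ ^ 2).toNNReal)) * b) κ := by
    have hl : HasDerivAt (fun x : ℝ => b * x) b κ := by
      simpa using (hasDerivAt_id κ).const_mul b
    exact (hasDerivAt_zeta (lam ^ 2 * γ ^ 2) (b * κ)).comp κ hl
  have h3 : HasDerivAt (fun x => Rred d L γ lam ε x ν)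
      (-(2 * γ ^ 2 * ν) * (erf' (b * κ / q) * (b / q))
        + γ ^ 2 * ((∫ g, 2 * erf (b * κ + g) * erf' (b * κ + g)
            ∂(gaussianReal 0 (lam ^ 2 * γ ^ 2).toNNReal)) * b)) κ := by
    have := (((h1.const_mul (2 * γ ^ 2 * ν)).const_sub (γ ^ 2)).add
      (h2.const_mul (γ ^ 2))).add_const (((L : ℝ) - 1) * zeta 0 (lam ^ 2))
    have h4 := this.add_const (ε ^ 2)
    unfold Rred
    rw [show -(2 * γ ^ 2 * ν) * (erf' (b * κ / q) * (b / q))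
      = -(2 * γ ^ 2 * ν * (erf' (b * κ / q) * (b / q))) by ring]
    exact h4
  rw [dkR, h3.deriv]

/-- The points of `[−1,1]²` where both `(1−κ²)·∂κR` and `(1−ν²)·∂νR` vanish are exactly
the five points `(0,0)`, `(1,1)`, `(1,−1)`, `(−1,1)`, `(−1,−1)`. -/
theorem stmt4 (d L : ℕ) (hd : 1 ≤ d) (hL : 1 ≤ L) (γ lam ε : ℝ)
    (hγ : 0 < γ) (hlam : 0 < lam) (hε : 0 ≤ ε) :
    {p : ℝ × ℝ | p ∈ sqIcc ∧
        (1 - p.1 ^ 2) * dkR d L γ lam ε p.1 p.2 = 0 ∧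
        (1 - p.2 ^ 2) * dvR d L γ lam ε p.1 p.2 = 0}
      = {((0 : ℝ), (0 : ℝ)), (1, 1), (1, -1), (-1, 1), (-1, -1)} := by
  have hs : (0:ℝ) < lam ^ 2 * γ ^ 2 := by positivity
  set s : ℝ := lam ^ 2 * γ ^ 2 with hsdef
  set b : ℝ := lam * Real.sqrt ((d : ℝ) / 2) with hbdef
  set q : ℝ := Real.sqrt (1 + 2 * lam ^ 2 * γ ^ 2) with hqdef
  have hbpos : 0 < b := by
    apply mul_pos hlam
    apply Real.sqrt_pos.2
    have : (1:ℝ) ≤ (d:ℝ) := by exact_mod_cast hd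
    linarith
  have hqpos : 0 < q := Real.sqrt_pos.2 (by positivity)
  set μ := gaussianReal 0 s.toNNReal with hμdef
  set D : ℝ → ℝ := fun t => ∫ g, 2 * erf (t + g) * erf' (t + g) ∂μ with hDdef
  -- key identity
  have hq1 : (1 : ℝ) + 2 * s = 1 + 2 * lam ^ 2 * γ ^ 2 := by rw [hsdef]; ring
  have hI1 : ∀ t : ℝ, ∫ g, erf' (t + g) ∂μ = erf' (t / q) / q := by
    intro t
    rw [hμdef, hqdef, ← hq1]
    exact integral_erf'_gaussian hs t
  -- strict inequalities
  have hint_D : ∀ t : ℝ, Integrable (fun g => 2 * erf (t + g) * erf' (t + g)) μ := by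
    intro t
    apply integrable_of_bound (by fun_prop) (2 * (2 / Real.sqrt Real.pi))
    intro x
    rw [norm_mul, norm_mul]
    have h1 : ‖erf (t + x)‖ ≤ 1 := abs_erf_le_one _
    have h2 : ‖erf' (t + x)‖ ≤ 2 / Real.sqrt Real.pi := by
      rw [Real.norm_eq_abs, abs_of_pos (erf'_pos _)]; exact erf'_le _
    have h3 : ‖(2:ℝ)‖ = 2 := by norm_num
    calc ‖(2:ℝ)‖ * ‖erf (t + x)‖ * ‖erf' (t + x)‖
        ≤ 2 * 1 * (2 / Real.sqrt Real.pi) := by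
          apply mul_le_mul _ h2 (norm_nonneg _) (by positivity)
          rw [h3]; exact mul_le_mul_of_nonneg_left h1 (by norm_num)
      _ = 2 * (2 / Real.sqrt Real.pi) := by ring
  have hint_E : ∀ t : ℝ, Integrable (fun g => 2 * erf' (t + g)) μ := by
    intro t
    apply integrable_of_bound (by fun_prop) (2 * (2 / Real.sqrt Real.pi))
    intro x
    rw [norm_mul, Real.norm_eq_abs (erf' _), abs_of_pos (erf'_pos _)]
    have h3 : ‖(2:ℝ)‖ = 2 := by norm_num
    rw [h3]
    exact mul_le_mul_of_nonneg_left (erf'_le _) (by norm_num)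
  have hDlt : ∀ t : ℝ, D t < 2 * (erf' (t / q) / q) := by
    intro t
    have hpos : 0 < ∫ g, (2 * erf' (t + g) - 2 * erf (t + g) * erf' (t + g)) ∂μ := by
      refine gauss_int_pos (by fun_prop) ?_
        (2 * (2 / Real.sqrt Real.pi) + 2 * (2 / Real.sqrt Real.pi)) ?_
      · intro x
        have h1 := erf_lt_one (t + x)
        have h2 := erf'_pos (t + x)
        nlinarith
      · intro x
        have h1 := abs_erf_le_one (t + x)
        have h2 := erf'_pos (t + x)
        have h3 := erf'_le (t + x)
        rw [Real.norm_eq_abs]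
        rw [abs_le]
        constructor <;> nlinarith [abs_le.1 h1]
    rw [integral_sub (hint_E t) (hint_D t)] at hpos
    have hE := hI1 t
    have : ∫ g, 2 * erf' (t + g) ∂μ = 2 * (erf' (t / q) / q) := by
      rw [integral_const_mul, hE]
    rw [this] at hpos
    rw [hDdef]
    linarith
  have hDgt : ∀ t : ℝ, -(2 * (erf' (t / q) / q)) < D t := by
    intro t
    have hpos : 0 < ∫ g, (2 * erf' (t + g) + 2 * erf (t + g) * erf' (t + g)) ∂μ := by
      refine gauss_int_pos (by fun_prop) ?_
        (2 * (2 / Real.sqrt Real.pi) + 2 * (2 / Real.sqrt Real.pi)) ?_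
      · intro x
        have h1 := neg_one_lt_erf (t + x)
        have h2 := erf'_pos (t + x)
        nlinarith
      · intro x
        have h1 := abs_erf_le_one (t + x)
        have h2 := erf'_pos (t + x)
        have h3 := erf'_le (t + x)
        rw [Real.norm_eq_abs, abs_le]
        constructor <;> nlinarith [abs_le.1 h1]
    rw [integral_add (hint_E t) (hint_D t)] at hpos
    have : ∫ g, 2 * erf' (t + g) ∂μ = 2 * (erf' (t / q) / q) := by
      rw [integral_const_mul, hI1 t]
    rw [this] at hpos
    rw [hDdef]
    linarith
  have hD0 : D 0 = 0 := by
    rw [hDdef]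
    apply integral_gaussian_odd (by fun_prop)
    intro x
    rw [zero_add, zero_add, erf_neg, erf'_even]
    ring
  -- rewrite derivative conditions
  have hdk : ∀ κ ν : ℝ, dkR d L γ lam ε κ ν
      = -(2 * γ ^ 2 * ν) * (erf' (b * κ / q) * (b / q)) + γ ^ 2 * (D (b * κ) * b) := by
    intro κ ν
    rw [dkR_eq d L γ lam ε κ ν hqpos.ne']
  have hdv : ∀ κ ν : ℝ, dvR d L γ lam ε κ ν = -(2 * γ ^ 2) * erf (b * κ / q) := by
    intro κ ν
    rw [dvR_eq]
  clear_value s b q μ D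
  ext p
  obtain ⟨κ, ν⟩ := p
  simp only [Set.mem_setOf_eq, Set.mem_insert_iff, Set.mem_singleton_iff, Prod.mk.injEq,
    sqIcc, Set.mem_Icc]
  constructor
  · rintro ⟨⟨⟨hκl, hκr⟩, hνl, hνr⟩, h1, h2⟩
    rw [hdk κ ν] at h1
    rw [hdv κ ν] at h2
    by_cases hκ2 : 1 - κ ^ 2 = 0
    · -- κ = ±1, then erf (b*κ/q) ≠ 0 forces ν = ±1
      have hκcases : κ = 1 ∨ κ = -1 := by
        have : (κ - 1) * (κ + 1) = 0 := by linear_combination -hκ2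
        rcases mul_eq_zero.1 this with h | h
        · left; linarith
        · right; linarith
      have herfne : erf (b * κ / q) ≠ 0 := by
        rw [Ne, erf_eq_zero_iff]
        apply div_ne_zero _ hqpos.ne'
        rcases hκcases with rfl | rfl
        · simpa using hbpos.ne'
        · simpa using hbpos.ne'
      have hν2 : 1 - ν ^ 2 = 0 := by
        rcases mul_eq_zero.1 h2 with h | h
        · exact h
        · exfalso
          apply herfne
          rcases mul_eq_zero.1 h with h' | h'
          · exact absurd h' (neg_ne_zero.2 (by positivity))
          · exact h'
      have hνcases : ν = 1 ∨ ν = -1 := by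
        have : (ν - 1) * (ν + 1) = 0 := by linear_combination -hν2
        rcases mul_eq_zero.1 this with h | h
        · left; linarith
        · right; linarith
      rcases hκcases with rfl | rfl <;> rcases hνcases with rfl | rfl <;> simp
    · -- κ interior, dkR = 0
      have hdκ0 : -(2 * γ ^ 2 * ν) * (erf' (b * κ / q) * (b / q)) + γ ^ 2 * (D (b * κ) * b) = 0 := by
        rcases mul_eq_zero.1 h1 with h | h
        · exact absurd h hκ2
        · exact h
      rcases mul_eq_zero.1 h2 with hν2 | herf0
      · -- ν = ±1 : contradiction
        exfalso
        have hνcases : ν = 1 ∨ ν = -1 := by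
          have : (ν - 1) * (ν + 1) = 0 := by linear_combination -hν2
          rcases mul_eq_zero.1 this with h | h
          · left; linarith
          · right; linarith
        have hγ2 : (0:ℝ) < γ ^ 2 := by positivity
        have hγb : γ ^ 2 * b ≠ 0 := by positivity
        rcases hνcases with rfl | rfl
        · have e1 : γ ^ 2 * b * (D (b * κ) - 2 * (erf' (b * κ / q) / q)) = 0 := by
            linear_combination hdκ0
          have := hDlt (b * κ)
          rcases mul_eq_zero.1 e1 with h | h
          · exact hγb h
          · linarith
        · have e2 : γ ^ 2 * b * (D (b * κ) + 2 * (erf' (b * κ / q) / q)) = 0 := by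
            linear_combination hdκ0
          have := hDgt (b * κ)
          rcases mul_eq_zero.1 e2 with h | h
          · exact hγb h
          · linarith
      · -- erf (b κ / q) = 0, hence κ = 0, then ν = 0
        have hκ0 : κ = 0 := by
          have h2γ : -(2 * γ ^ 2) ≠ 0 := neg_ne_zero.2 (by positivity)
          have : erf (b * κ / q) = 0 := by
            rcases mul_eq_zero.1 herf0 with h | h
            · exact absurd h h2γ
            · exact h
          have := erf_eq_zero_iff.1 this
          rcases div_eq_zero_iff.1 this with h | h
          · rcases mul_eq_zero.1 h with h' | h'
            · exact absurd h' hbpos.ne'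
            · exact h'
          · exact absurd h hqpos.ne'
        subst hκ0
        have hν0 : ν = 0 := by
          rw [mul_zero, zero_div, hD0] at hdκ0
          have h6 : erf' 0 * (b / q) > 0 := mul_pos (erf'_pos 0) (div_pos hbpos hqpos)
          have e3 : ν * (2 * γ ^ 2 * (erf' 0 * (b / q))) = 0 := by linear_combination -hdκ0
          rcases mul_eq_zero.1 e3 with h | h
          · exact h
          · exfalso
            have : (0:ℝ) < 2 * γ ^ 2 * (erf' 0 * (b / q)) := by positivity
            exact this.ne' h
        left
        exact ⟨rfl, hν0⟩
  · intro h
    have h00 : dkR d L γ lam ε 0 0 = 0 := by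
      rw [hdk 0 0]
      simp [hD0]
    have h00' : dvR d L γ lam ε 0 0 = 0 := by
      rw [hdv 0 0]
      simp [erf_zero]
    rcases h with ⟨h1, h2⟩ | ⟨h1, h2⟩ | ⟨h1, h2⟩ | ⟨h1, h2⟩ | ⟨h1, h2⟩ <;> subst h1 <;> subst h2
    · exact ⟨⟨by norm_num, by norm_num⟩, by rw [h00]; ring, by rw [h00']; ring⟩
    · exact ⟨⟨by norm_num, by norm_num⟩, by ring, by ring⟩
    · exact ⟨⟨by norm_num, by norm_num⟩, by ring, by ring⟩
    · exact ⟨⟨by norm_num, by norm_num⟩, by ring, by ring⟩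
    · exact ⟨⟨by norm_num, by norm_num⟩, by ring, by ring⟩
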